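/- Let δ ∈ (0, 1/2) and let μ, ν be Borel probability measures on 2^ω that are strongly positive with parameter δ. Let A, B ∈ 2^ω satisfy Φ_{μ→ν}(A) = B, i.e. for every k there is an n with (A↾n)_μ ⊆ (B↾k)_ν, and for each n let g(n) = max{k : (A↾n)_μ ⊆ (B↾k)_ν}. Suppose h₁ ∈ ℝ and h₂ ∈ ℝ with h₂ > 0 are such that −(1/n)·log μ(⟦A↾n⟧) → h₁ and −(1/k)·log ν(⟦B↾k⟧) → h₂. Then limsup_{n→∞} g(n)/n = h₁/h₂. -/

import Mathlib

open Filter MeasureTheory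

/-- The length-`n` initial segment of `X ∈ 2^ω`, as a finite binary string. -/
def seg (X : ℕ → Bool) (n : ℕ) : List Bool := (List.range n).map X

/-- The cylinder `⟦σ⟧` of all sequences extending the string `σ`. -/
def cyl (σ : List Bool) : Set (ℕ → Bool) := {X | seg X σ.length = σ}

/-- `μ` is strongly positive with parameter `δ`:
`μ(⟦σ⌢0⟧)/μ(⟦σ⟧) ∈ [δ, 1−δ]` for every string `σ`. -/
def StronglyPositive (μ : Measure (ℕ → Bool)) (δ : ℝ) : Prop :=
  ∀ σ : List Bool,
    ENNReal.ofReal δ * μ (cyl σ) ≤ μ (cyl (σ ++ [false])) ∧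
    μ (cyl (σ ++ [false])) ≤ ENNReal.ofReal (1 - δ) * μ (cyl σ)

/-- The left endpoint `Σ_{τ <lex σ, |τ|=|σ|} μ(⟦τ⟧)` of the interval `(σ)_μ`. -/
noncomputable def lowerEnd (μ : Measure (ℕ → Bool)) (σ : List Bool) : ℝ :=
  ∑ f : Fin σ.length → Bool,
    if List.Lex (· < ·) (List.ofFn f) σ then (μ (cyl (List.ofFn f))).toReal else 0

/-- The closed interval `(σ)_μ ⊆ [0,1]` associated to the string `σ` and the
measure `μ`, used in the Levin–Kautz conversion procedure. -/
noncomputable def ivl (μ : Measure (ℕ → Bool)) (σ : List Bool) : Set ℝ :=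
  Set.Icc (lowerEnd μ σ) (lowerEnd μ σ + (μ (cyl σ)).toReal)

lemma seg_length (X : ℕ → Bool) (n : ℕ) : (seg X n).length = n := by
  simp [seg]

lemma seg_succ (X : ℕ → Bool) (n : ℕ) : seg X (n + 1) = seg X n ++ [X n] := by
  simp [seg, List.range_succ]

lemma cyl_nil : cyl [] = Set.univ := by
  ext X; simp [cyl, seg]

lemma mem_cyl_append {σ : List Bool} {b : Bool} {X : ℕ → Bool} :
    X ∈ cyl (σ ++ [b]) ↔ X ∈ cyl σ ∧ X σ.length = b := by
  have hlen : (σ ++ [b]).length = σ.length + 1 := by simp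
  constructor
  · intro h
    have h' : seg X (σ.length + 1) = σ ++ [b] := by
      have := h; simpa [cyl, hlen] using this
    rw [seg_succ] at h'
    have hl : (seg X σ.length).length = σ.length := seg_length _ _
    have := List.append_inj h' (by simp [hl])
    refine ⟨?_, ?_⟩
    · simpa [cyl] using this.1
    · simpa using congrArg (fun l => l.headI) this.2
  · rintro ⟨h1, h2⟩
    have h1' : seg X σ.length = σ := h1
    show seg X (σ ++ [b]).length = σ ++ [b]
    rw [hlen, seg_succ, h1', h2]

lemma measurableSet_cyl (σ : List Bool) : MeasurableSet (cyl σ) := by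
  have : cyl σ = ⋂ i ∈ Finset.range σ.length, {X : ℕ → Bool | X i = σ.getD i false} := by
    ext X
    simp only [cyl, Set.mem_setOf_eq, Set.mem_iInter, Finset.mem_range]
    constructor
    · intro h i hi
      have : (seg X σ.length).getD i false = σ.getD i false := by rw [h]
      simpa [seg, List.getD, List.getElem?_map, List.getElem?_range, hi] using this
    · intro h
      apply List.ext_getElem (by simp [seg_length])
      intro i hi1 hi2
      have h2 := h i (by simpa using hi2)
      rw [List.getD_eq_getElem σ false hi2] at h2
      simpa [seg] using h2
  rw [this]
  apply MeasurableSet.biInter (Set.to_countable _)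
  intro i _
  exact measurableSet_eq_fun (measurable_pi_apply i) measurable_const

lemma cyl_split (σ : List Bool) :
    cyl σ = cyl (σ ++ [false]) ∪ cyl (σ ++ [true]) := by
  ext X
  simp only [Set.mem_union, mem_cyl_append]
  rcases Bool.dichotomy (X σ.length) with h | h <;> simp [h] <;> tauto

lemma cyl_disj (σ : List Bool) :
    Disjoint (cyl (σ ++ [false])) (cyl (σ ++ [true])) := by
  rw [Set.disjoint_iff]
  rintro X ⟨h1, h2⟩
  rw [mem_cyl_append] at h1 h2
  rw [h1.2] at h2
  exact absurd h2.2 (by simp)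

lemma measure_cyl_split (μ : Measure (ℕ → Bool)) (σ : List Bool) :
    μ (cyl σ) = μ (cyl (σ ++ [false])) + μ (cyl (σ ++ [true])) := by
  rw [cyl_split σ, measure_union (cyl_disj σ) (measurableSet_cyl _)]

-- continuation: measure arithmetic
section MeasureFacts

variable {δ : ℝ} (hδ0 : 0 < δ) (hδ1 : δ < 1/2)
variable (μ : MeasureTheory.Measure (ℕ → Bool)) [MeasureTheory.IsProbabilityMeasure μ]
variable (hμ : StronglyPositive μ δ)

lemma cyl_ne_top (σ : List Bool) : μ (cyl σ) ≠ ⊤ :=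
  (MeasureTheory.measure_lt_top μ _).ne

lemma mcyl_nil : (μ (cyl [])).toReal = 1 := by
  rw [cyl_nil]; simp

lemma mcyl_split (σ : List Bool) :
    (μ (cyl σ)).toReal
      = (μ (cyl (σ ++ [false]))).toReal + (μ (cyl (σ ++ [true]))).toReal := by
  rw [measure_cyl_split μ σ, ENNReal.toReal_add (cyl_ne_top μ _) (cyl_ne_top μ _)]

include hδ0 hδ1 hμ in
lemma mcyl_false_bounds (σ : List Bool) :
    δ * (μ (cyl σ)).toReal ≤ (μ (cyl (σ ++ [false]))).toReal ∧
    (μ (cyl (σ ++ [false]))).toReal ≤ (1 - δ) * (μ (cyl σ)).toReal := by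
  obtain ⟨h1, h2⟩ := hμ σ
  constructor
  · have := ENNReal.toReal_mono (cyl_ne_top μ _) h1
    rwa [ENNReal.toReal_mul, ENNReal.toReal_ofReal hδ0.le] at this
  · have := ENNReal.toReal_mono (by finiteness) h2
    rwa [ENNReal.toReal_mul, ENNReal.toReal_ofReal (by linarith : (0:ℝ) ≤ 1 - δ)] at this

include hδ0 hδ1 hμ in
lemma mcyl_append_bounds (σ : List Bool) (b : Bool) :
    δ * (μ (cyl σ)).toReal ≤ (μ (cyl (σ ++ [b]))).toReal ∧
    (μ (cyl (σ ++ [b]))).toReal ≤ (1 - δ) * (μ (cyl σ)).toReal := by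
  obtain ⟨h1, h2⟩ := mcyl_false_bounds hδ0 hδ1 μ hμ σ
  have hs := mcyl_split μ σ
  cases b
  · exact ⟨h1, h2⟩
  · constructor <;> nlinarith

include hδ0 hδ1 hμ in
lemma mcyl_pos (σ : List Bool) : 0 < (μ (cyl σ)).toReal := by
  induction σ using List.reverseRecOn with
  | nil => rw [mcyl_nil]; norm_num
  | append_singleton σ b ih =>
      have := (mcyl_append_bounds hδ0 hδ1 μ hμ σ b).1
      nlinarith

include hδ0 hδ1 hμ in
lemma mcyl_seg_le (X : ℕ → Bool) (n : ℕ) :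
    (μ (cyl (seg X n))).toReal ≤ (1 - δ)^n := by
  induction n with
  | zero => simp [seg, mcyl_nil μ]
  | succ n ih =>
      rw [seg_succ]
      calc (μ (cyl (seg X n ++ [X n]))).toReal ≤ (1-δ) * (μ (cyl (seg X n))).toReal :=
            (mcyl_append_bounds hδ0 hδ1 μ hμ _ _).2
        _ ≤ (1-δ) * (1-δ)^n := by nlinarith
        _ = (1-δ)^(n+1) := by ring

include hδ0 hδ1 hμ in
lemma mcyl_seg_ge (X : ℕ → Bool) (n : ℕ) :
    δ^n ≤ (μ (cyl (seg X n))).toReal := by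
  induction n with
  | zero => simp [seg, mcyl_nil μ]
  | succ n ih =>
      rw [seg_succ]
      calc (δ:ℝ)^(n+1) = δ * δ^n := by ring
        _ ≤ δ * (μ (cyl (seg X n))).toReal := by nlinarith
        _ ≤ _ := (mcyl_append_bounds hδ0 hδ1 μ hμ _ _).1

end MeasureFacts

-- lowerEnd lemmas
section LowerEnd

lemma ofFn_snoc' {n : ℕ} (g : Fin n → Bool) (c : Bool) :
    List.ofFn (Fin.snoc g c : Fin (n+1) → Bool) = List.ofFn g ++ [c] := by
  rw [List.ofFn_succ']
  simp [Fin.snoc_castSucc, Fin.snoc_last, List.concat_eq_append]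

lemma sum_fn_succ {M : Type*} [AddCommMonoid M] (n : ℕ) (F : List Bool → M) :
    ∑ f : Fin (n+1) → Bool, F (List.ofFn f)
      = ∑ f : Fin n → Bool, (F (List.ofFn f ++ [false]) + F (List.ofFn f ++ [true])) := by
  rw [← Equiv.sum_comp (Fin.snocEquiv (fun _ => Bool)) (fun f => F (List.ofFn f)),
      Fintype.sum_prod_type, Fintype.sum_bool, ← Finset.sum_add_distrib]
  refine Finset.sum_congr rfl fun g _ => ?_
  have h1 : ∀ c : Bool, (Fin.snocEquiv (fun _ => Bool)) (c, g) = Fin.snoc g c :=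
    fun c => rfl
  rw [h1, h1, ofFn_snoc', ofFn_snoc']
  exact add_comm _ _

lemma lex_concat_iff : ∀ (l₁ l₂ : List Bool), l₁.length = l₂.length → ∀ (c b : Bool),
    (List.Lex (· < ·) (l₁ ++ [c]) (l₂ ++ [b]) ↔
      List.Lex (· < ·) l₁ l₂ ∨ (l₁ = l₂ ∧ c < b))
  | [], [], _, c, b => by
      simpa using (List.Lex.singleton_iff c b (r := (· < ·)))
  | [], l::ls, h, _, _ => by simp at h
  | l::ls, [], h, _, _ => by simp at h
  | a::l₁, a'::l₂, h, c, b => by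
      have ih := lex_concat_iff l₁ l₂ (by simpa using h) c b
      constructor
      · intro hl
        cases hl with
        | cons h' =>
            rcases ih.1 h' with h'' | ⟨he, hc⟩
            · exact Or.inl (List.Lex.cons h'')
            · exact Or.inr ⟨by rw [he], hc⟩
        | rel h' => exact Or.inl (List.Lex.rel h')
      · intro hl
        rcases hl with h' | ⟨he, hc⟩
        · cases h' with
          | cons h'' => exact List.Lex.cons (ih.2 (Or.inl h''))
          | rel h'' => exact List.Lex.rel h''
        · injection he with h1 h2
          subst h1; subst h2
          exact List.Lex.cons (ih.2 (Or.inr ⟨rfl, hc⟩))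

end LowerEnd

section LowerEndCompute
open MeasureTheory

variable (μ : Measure (ℕ → Bool)) [IsProbabilityMeasure μ]

lemma lowerEnd_eq (σ : List Bool) {n : ℕ} (h : σ.length = n) :
    lowerEnd μ σ = ∑ f : Fin n → Bool,
      (if List.Lex (· < ·) (List.ofFn f) σ then (μ (cyl (List.ofFn f))).toReal else 0) := by
  subst h; rfl

lemma not_lex_self : ∀ σ : List Bool, ¬ List.Lex (· < ·) σ σ
  | [] => List.not_lex_nil
  | a::l => fun h => by
      cases h with
      | cons h => exact not_lex_self l h
      | rel h => exact lt_irrefl a h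

lemma lowerEnd_append_false (σ : List Bool) :
    lowerEnd μ (σ ++ [false]) = lowerEnd μ σ := by
  rw [lowerEnd_eq μ (σ ++ [false]) (by simp : (σ ++ [false]).length = σ.length + 1),
    sum_fn_succ σ.length
      (fun τ => if List.Lex (· < ·) τ (σ ++ [false]) then (μ (cyl τ)).toReal else 0)]
  refine Finset.sum_congr rfl fun f _ => ?_
  have hlen : (List.ofFn f).length = σ.length := by simp
  simp only [lex_concat_iff _ _ hlen, lt_self_iff_false, and_false, or_false,
    show ((true:Bool) < false) = False from by simp, show ((false:Bool) < true) = True from by simp,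
    and_true]
  by_cases h : List.Lex (· < ·) (List.ofFn f) σ
  · rw [if_pos h, if_pos h, if_pos h, ← mcyl_split]
  · rw [if_neg h, if_neg h, if_neg h]; ring

end LowerEndCompute

section LowerEndTrue
open MeasureTheory

variable (μ : Measure (ℕ → Bool)) [IsProbabilityMeasure μ]

lemma lowerEnd_append_true (σ : List Bool) :
    lowerEnd μ (σ ++ [true]) = lowerEnd μ σ + (μ (cyl (σ ++ [false]))).toReal := by
  rw [lowerEnd_eq μ (σ ++ [true]) (by simp : (σ ++ [true]).length = σ.length + 1),
    sum_fn_succ σ.length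
      (fun τ => if List.Lex (· < ·) τ (σ ++ [true]) then (μ (cyl τ)).toReal else 0)]
  have key : ∀ f : Fin σ.length → Bool,
      ((if List.Lex (· < ·) (List.ofFn f ++ [false]) (σ ++ [true])
          then (μ (cyl (List.ofFn f ++ [false]))).toReal else 0) +
       (if List.Lex (· < ·) (List.ofFn f ++ [true]) (σ ++ [true])
          then (μ (cyl (List.ofFn f ++ [true]))).toReal else 0))
      = (if List.Lex (· < ·) (List.ofFn f) σ then (μ (cyl (List.ofFn f))).toReal else 0)
        + (if List.ofFn f = σ then (μ (cyl (σ ++ [false]))).toReal else 0) := by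
    intro f
    have hlen : (List.ofFn f).length = σ.length := by simp
    simp only [lex_concat_iff _ _ hlen, lt_self_iff_false, and_false, or_false,
      show ((false:Bool) < true) = True from by simp, and_true]
    by_cases h : List.Lex (· < ·) (List.ofFn f) σ
    · have he : ¬ (List.ofFn f = σ) := fun he => not_lex_self σ (by rwa [he] at h)
      rw [if_pos (Or.inl h), if_pos h, if_pos h, if_neg he, ← mcyl_split, add_zero]
    · by_cases he : List.ofFn f = σ
      · rw [if_pos (Or.inr he), if_neg h, if_neg h, if_pos he, he, add_zero, zero_add]
      · simp [h, he]
  rw [Finset.sum_congr rfl (fun f _ => key f), Finset.sum_add_distrib]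
  congr 1
  rw [Finset.sum_eq_single_of_mem σ.get (Finset.mem_univ _)]
  · rw [if_pos (List.ofFn_get σ)]
  · intro f _ hne
    refine if_neg (fun he => hne ?_)
    exact List.ofFn_injective (by rw [he, List.ofFn_get])

lemma mcyl_nonneg (σ : List Bool) : 0 ≤ (μ (cyl σ)).toReal := ENNReal.toReal_nonneg

lemma ivl_append_subset (σ : List Bool) (b : Bool) :
    ivl μ (σ ++ [b]) ⊆ ivl μ σ := by
  have hsplit := mcyl_split μ σ
  cases b
  · rw [ivl, ivl, lowerEnd_append_false]
    exact Set.Icc_subset_Icc le_rfl (by nlinarith [mcyl_nonneg μ (σ ++ [true])])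
  · rw [ivl, ivl, lowerEnd_append_true]
    exact Set.Icc_subset_Icc (by nlinarith [mcyl_nonneg μ (σ ++ [false])]) (by nlinarith)

lemma ivl_seg_nested (X : ℕ → Bool) {m n : ℕ} (h : m ≤ n) :
    ivl μ (seg X n) ⊆ ivl μ (seg X m) := by
  induction n with
  | zero => rw [Nat.le_zero.mp h]
  | succ n ih =>
      rcases Nat.lt_or_ge m (n+1) with h' | h'
      · exact (by rw [seg_succ]; exact ivl_append_subset μ _ _ :
          ivl μ (seg X (n+1)) ⊆ ivl μ (seg X n)).trans (ih (Nat.lt_succ_iff.mp h'))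
      · rw [Nat.le_antisymm h h']

end LowerEndTrue

set_option maxHeartbeats 2000000 in
/-- Let `μ, ν` be strongly positive (with parameter `δ ∈ (0,1/2)`) Borel
probability measures on `2^ω`, let `A, B ∈ 2^ω` with `Φ_{μ→ν}(A) = B` (every
interval `(B↾k)_ν` eventually contains `(A↾n)_μ`), and let
`g n = max{k : (A↾n)_μ ⊆ (B↾k)_ν}`.  If `−(1/n)·log μ(⟦A↾n⟧) → h₁` and
`−(1/k)·log ν(⟦B↾k⟧) → h₂ > 0`, then `limsup_n g(n)/n = h₁/h₂`. -/
theorem stmt17 (δ : ℝ) (hδ : δ ∈ Set.Ioo (0 : ℝ) (1 / 2))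
    (μ ν : Measure (ℕ → Bool)) [IsProbabilityMeasure μ] [IsProbabilityMeasure ν]
    (hμ : StronglyPositive μ δ) (hν : StronglyPositive ν δ)
    (A B : ℕ → Bool)
    (hAB : ∀ k : ℕ, ∃ n : ℕ, ivl μ (seg A n) ⊆ ivl ν (seg B k))
    (g : ℕ → ℕ)
    (hg : ∀ n : ℕ, ivl μ (seg A n) ⊆ ivl ν (seg B (g n)))
    (hgmax : ∀ n k : ℕ, ivl μ (seg A n) ⊆ ivl ν (seg B k) → k ≤ g n)
    (h₁ h₂ : ℝ) (hh₂ : 0 < h₂)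
    (hA : Tendsto (fun n : ℕ => -Real.log ((μ (cyl (seg A n))).toReal) / n)
      atTop (nhds h₁))
    (hB : Tendsto (fun k : ℕ => -Real.log ((ν (cyl (seg B k))).toReal) / k)
      atTop (nhds h₂)) :
    limsup (fun n : ℕ => (g n : ℝ) / n) atTop = h₁ / h₂ := by
  classical
  obtain ⟨hδ0, hδ1⟩ := hδ
  have hδ1' : (1:ℝ) - δ < 1 := by linarith
  have hδpos1 : (0:ℝ) < 1 - δ := by linarith
  set a : ℕ → ℝ := fun n => (μ (cyl (seg A n))).toReal with ha_def
  set b : ℕ → ℝ := fun k => (ν (cyl (seg B k))).toReal with hb_def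
  set ℓ : ℕ → ℝ := fun n => lowerEnd μ (seg A n) with hℓ_def
  set L : ℕ → ℝ := fun k => lowerEnd ν (seg B k) with hL_def
  have apos : ∀ n, 0 < a n := fun n => mcyl_pos hδ0 hδ1 μ hμ _
  have bpos : ∀ k, 0 < b k := fun k => mcyl_pos hδ0 hδ1 ν hν _
  have aone : a 0 = 1 := by simp [ha_def, seg, mcyl_nil μ]
  have ale : ∀ n, a n ≤ (1-δ)^n := fun n => mcyl_seg_le hδ0 hδ1 μ hμ A n
  have ble : ∀ k, b k ≤ (1-δ)^k := fun k => mcyl_seg_le hδ0 hδ1 ν hν B k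
  have age : ∀ n, δ^n ≤ a n := fun n => mcyl_seg_ge hδ0 hδ1 μ hμ A n
  have bstep : ∀ k, δ * b k ≤ b (k+1) ∧ b (k+1) ≤ (1-δ) * b k := by
    intro k
    have := mcyl_append_bounds hδ0 hδ1 ν hν (seg B k) (B k)
    rwa [← seg_succ] at this
  -- interval identification
  have hivlμ : ∀ n, ivl μ (seg A n) = Set.Icc (ℓ n) (ℓ n + a n) := fun n => rfl
  have hivlν : ∀ k, ivl ν (seg B k) = Set.Icc (L k) (L k + b k) := fun k => rfl
  -- subset facts
  have hgsub : ∀ n, L (g n) ≤ ℓ n ∧ ℓ n + a n ≤ L (g n) + b (g n) := by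
    intro n
    have h := hg n
    rw [hivlμ, hivlν, Set.Icc_subset_Icc_iff (by linarith [apos n])] at h
    exact h
  have aub : ∀ n, a n ≤ b (g n) := by
    intro n; have := hgsub n; linarith [this.1, this.2]
  -- nestedness of the I intervals
  have Isub : ∀ {m n : ℕ}, m ≤ n → ℓ m ≤ ℓ n ∧ ℓ n + a n ≤ ℓ m + a m := by
    intro m n h
    have hs := ivl_seg_nested μ A h
    rw [hivlμ, hivlμ, Set.Icc_subset_Icc_iff (by linarith [apos n])] at hs
    exact hs
  -- the point x
  have hbdd : BddAbove (Set.range ℓ) := by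
    refine ⟨ℓ 0 + a 0, ?_⟩
    rintro - ⟨n, rfl⟩
    have := (Isub (Nat.zero_le n))
    linarith [apos n, this.1, this.2]
  set x : ℝ := ⨆ n, ℓ n with hx_def
  have hxmem : ∀ n, ℓ n ≤ x ∧ x ≤ ℓ n + a n := by
    intro n
    constructor
    · exact le_ciSup hbdd n
    · refine ciSup_le fun m => ?_
      rcases le_total m n with h | h
      · linarith [(Isub h).1, apos n]
      · linarith [(Isub h).2, apos m]
  have hxJ : ∀ k, L k ≤ x ∧ x ≤ L k + b k := by
    intro k
    obtain ⟨n, hn⟩ := hAB k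
    have := hn (by rw [hivlμ]; exact ⟨(hxmem n).1, (hxmem n).2⟩)
    rw [hivlν] at this
    exact this
  -- monotonicity of g
  have gmono : ∀ {m n : ℕ}, m ≤ n → g m ≤ g n := by
    intro m n h
    exact hgmax n (g m) ((ivl_seg_nested μ A h).trans (hg m))
  have gtop : Tendsto g atTop atTop := by
    rw [tendsto_atTop_atTop]
    intro k
    obtain ⟨n₀, hn₀⟩ := hAB k
    exact ⟨n₀, fun n hn => le_trans (hgmax n₀ k hn₀) (gmono hn)⟩
  -- maximality
  have hnotsub : ∀ n, ¬ (ivl μ (seg A n) ⊆ ivl ν (seg B (g n + 1))) := by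
    intro n h
    exact Nat.not_succ_le_self (g n) (hgmax n (g n + 1) h)
  -- (∗∗): sufficient condition for g n ≥ k
  have gge : ∀ n k, a n ≤ x - L k → a n ≤ (L k + b k) - x → k ≤ g n := by
    intro n k h1 h2
    refine hgmax n k ?_
    rw [hivlμ, hivlν]
    refine Set.Icc_subset_Icc (by linarith [(hxmem n).2]) (by linarith [(hxmem n).1])
  -- L recursions
  have hLfalse : ∀ k, B k = false → L (k+1) = L k := by
    intro k h
    show lowerEnd ν (seg B (k+1)) = lowerEnd ν (seg B k)
    rw [seg_succ, h, lowerEnd_append_false]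
  have hLtrue : ∀ k, B k = true → L (k+1) = L k + (b k - b (k+1)) := by
    intro k h
    show lowerEnd ν (seg B (k+1)) = lowerEnd ν (seg B k) + (b k - b (k+1))
    rw [seg_succ, h, lowerEnd_append_true]
    congr 1
    have hsplit := mcyl_split ν (seg B k)
    have : b (k+1) = (ν (cyl (seg B k ++ [true]))).toReal := by
      rw [hb_def]; simp only []; rw [seg_succ, h]
    have hbk : b k = (ν (cyl (seg B k))).toReal := rfl
    rw [this, hbk]
    linarith [hsplit]
  -- log tools
  have neglog_lt : ∀ {u v : ℝ}, 0 < u → u < v → -Real.log v < -Real.log u := by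
    intro u v hu huv
    have := Real.log_lt_log hu huv
    linarith
  have neglog_le : ∀ {u v : ℝ}, 0 < u → u ≤ v → -Real.log v ≤ -Real.log u := by
    intro u v hu huv
    have := Real.log_le_log hu huv
    linarith
  -- h₁ is positive
  have hh₁ : 0 < h₁ := by
    have hlog1δ : 0 < -Real.log (1 - δ) := by
      have := Real.log_neg hδpos1 hδ1'
      linarith
    refine lt_of_lt_of_le hlog1δ (ge_of_tendsto hA ?_)
    filter_upwards [eventually_ge_atTop 1] with n hn
    have hn0 : (0:ℝ) < n := by exact_mod_cast Nat.pos_of_ne_zero (by omega)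
    rw [le_div_iff₀ hn0]
    have h2 := neglog_le (apos n) (ale n)
    rw [Real.log_pow] at h2
    have hnn : (1:ℝ) ≤ (n:ℝ) := by exact_mod_cast hn
    nlinarith
  have hr0 : 0 < h₁ / h₂ := div_pos hh₁ hh₂
  -- upper bound part
  have upperC : ∀ c : ℝ, h₁ / h₂ < c → ∀ᶠ n in atTop, (g n : ℝ) / n ≤ c := by
    intro c hc
    have hc0 : 0 < c := lt_trans hr0 hc
    set ε : ℝ := (c * h₂ - h₁) / (2 * (1 + c)) with hε_def
    have hch : h₁ < c * h₂ := (div_lt_iff₀ hh₂).mp hc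
    have hεpos : 0 < ε := div_pos (by linarith) (by linarith)
    have hkey : c * h₂ - h₁ = 2 * (1 + c) * ε := by
      rw [hε_def]; field_simp
    have hεh₂ : ε < h₂ := by nlinarith
    have hev1 : ∀ᶠ n in atTop, -Real.log (a n) / n < h₁ + ε :=
      hA.eventually_lt_const (by linarith)
    have hev2 : ∀ᶠ n in atTop, h₂ - ε < -Real.log (b (g n)) / (g n) :=
      (hB.comp gtop).eventually_const_lt (by linarith)
    have hev3 : ∀ᶠ n in atTop, 1 ≤ g n := gtop.eventually_ge_atTop 1
    filter_upwards [hev1, hev2, hev3, eventually_ge_atTop 1] with n e1 e2 e3 e4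
    have hn0 : (0:ℝ) < n := by exact_mod_cast Nat.pos_of_ne_zero (by omega)
    have hg0 : (0:ℝ) < g n := by exact_mod_cast Nat.pos_of_ne_zero (by omega)
    rw [div_lt_iff₀ hn0] at e1
    rw [lt_div_iff₀ hg0] at e2
    have l3 : -Real.log (b (g n)) ≤ -Real.log (a n) := neglog_le (apos n) (aub n)
    rw [div_le_iff₀ hn0]
    nlinarith [mul_pos hn0 (show (0:ℝ) < h₂ - ε by linarith)]
  -- lower bound part : frequently
  have frequentC : ∀ c : ℝ, c < h₁ / h₂ → ∃ᶠ n in atTop, c ≤ (g n : ℝ) / n := by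
    intro c hc
    rcases le_or_gt c 0 with hc0 | hc0
    · refine Eventually.frequently ?_
      filter_upwards [eventually_ge_atTop 1] with n hn
      have : (0:ℝ) ≤ (g n : ℝ) / n := by positivity
      linarith
    set ε : ℝ := (h₁ - c * h₂) / (2 * (1 + c)) with hε_def
    have hch : c * h₂ < h₁ := (lt_div_iff₀ hh₂).mp hc
    have hεpos : 0 < ε := div_pos (by linarith) (by linarith)
    have hkey : h₁ - c * h₂ = 2 * (1 + c) * ε := by
      rw [hε_def]; field_simp
    have hεh₁ : ε < h₁ := by nlinarith
    -- eventual log bounds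
    obtain ⟨N₁, hN₁⟩ : ∃ N₁ : ℕ, ∀ n ≥ N₁, (n:ℝ) * (h₁ - ε) ≤ -Real.log (a n) := by
      have hev := hA.eventually_const_lt (show h₁ - ε < h₁ by linarith)
      rw [eventually_atTop] at hev
      obtain ⟨N, hN⟩ := hev
      refine ⟨N + 1, fun n hn => ?_⟩
      have h' := hN n (by omega)
      have hn0 : (0:ℝ) < n := by exact_mod_cast Nat.pos_of_ne_zero (by omega)
      rw [lt_div_iff₀ hn0] at h'
      nlinarith
    obtain ⟨N₂, hN₂⟩ : ∃ N₂ : ℕ, ∀ k ≥ N₂, -Real.log (b k) ≤ (k:ℝ) * (h₂ + ε) := by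
      have hev := hB.eventually_lt_const (show h₂ < h₂ + ε by linarith)
      rw [eventually_atTop] at hev
      obtain ⟨N, hN⟩ := hev
      refine ⟨N + 1, fun k hk => ?_⟩
      have h' := hN k (by omega)
      have hk0 : (0:ℝ) < k := by exact_mod_cast Nat.pos_of_ne_zero (by omega)
      rw [div_lt_iff₀ hk0] at h'
      nlinarith
    by_cases hconst : ∃ m₀, ∀ m, m₀ ≤ m → B m = B m₀
    · -- anchored case
      obtain ⟨m₀, hm₀⟩ := hconst
      have claimA : ∀ n, m₀ ≤ g n → b (g n + 1) < a n := by
        intro n hgn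
        have h5 := hnotsub n
        rw [hivlμ, hivlν, Set.Icc_subset_Icc_iff (by linarith [apos n])] at h5
        push_neg at h5
        rcases Bool.dichotomy (B m₀) with h0 | h0
        · -- left endpoints constant
          have hLc : ∀ m, m₀ ≤ m → L m = L m₀ := by
            intro m hm
            induction m, hm using Nat.le_induction with
            | base => rfl
            | succ m hm ih => rw [hLfalse m (by rw [hm₀ m hm, h0]), ih]
          have hxL : x = L m₀ := by
            refine le_antisymm ?_ (hxJ m₀).1
            by_contra hgt
            push_neg at hgt
            obtain ⟨m₁, hm₁⟩ := exists_pow_lt_of_lt_one (show (0:ℝ) < x - L m₀ by linarith) hδ1'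
            have hble : b (max m₁ m₀) ≤ (1-δ)^m₁ :=
              le_trans (ble _) (pow_le_pow_of_le_one (by linarith) (by linarith) (le_max_left _ _))
            have h2 := (hxJ (max m₁ m₀)).2
            rw [hLc _ (le_max_right _ _)] at h2
            linarith
          have h3 := (hgsub n).1
          rw [hLc (g n) hgn] at h3
          have hℓx : ℓ n = x := le_antisymm (hxmem n).1 (by rw [hxL]; exact h3)
          have hL1 : L (g n + 1) = x := by rw [hLc (g n + 1) (by omega), hxL]
          have h6 := h5 (by rw [hL1, hℓx])
          rw [hL1, hℓx] at h6
          linarith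
        · -- right endpoints constant
          have hRc : ∀ m, m₀ ≤ m → L m + b m = L m₀ + b m₀ := by
            intro m hm
            induction m, hm using Nat.le_induction with
            | base => rfl
            | succ m hm ih =>
                rw [hLtrue m (by rw [hm₀ m hm, h0])] at *
                linarith
          have hxR : x = L m₀ + b m₀ := by
            refine le_antisymm (hxJ m₀).2 ?_
            by_contra hgt
            push_neg at hgt
            obtain ⟨m₁, hm₁⟩ := exists_pow_lt_of_lt_one
              (show (0:ℝ) < (L m₀ + b m₀) - x by linarith) hδ1'
            have hble : b (max m₁ m₀) ≤ (1-δ)^m₁ :=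
              le_trans (ble _) (pow_le_pow_of_le_one (by linarith) (by linarith) (le_max_left _ _))
            have h2 := (hxJ (max m₁ m₀)).1
            have h2' := hRc _ (le_max_right m₁ m₀)
            linarith
          have h3 := (hgsub n).2
          rw [hRc (g n) hgn] at h3
          have hua : ℓ n + a n = x := le_antisymm (by rw [hxR]; exact h3) (hxmem n).2
          by_contra hcon
          push_neg at hcon
          have hR1 : L (g n + 1) + b (g n + 1) = x := by rw [hRc (g n + 1) (by omega), hxR]
          have h6 := h5 (by linarith)
          linarith
      -- eventual estimate
      refine Eventually.frequently ?_
      have hev4 : ∀ᶠ n in atTop, m₀ ≤ g n := gtop.eventually_ge_atTop m₀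
      have hev5 : ∀ᶠ n in atTop, N₂ ≤ g n + 1 :=
        (gtop.eventually_ge_atTop N₂).mono (fun n h => by omega)
      have hev6 : ∀ᶠ (n:ℕ) in atTop, (h₂ + ε) ≤ (n:ℝ) * (ε * (1 + c)) := by
        have := eventually_ge_atTop (Nat.ceil ((h₂ + ε) / (ε * (1 + c))))
        filter_upwards [this] with n hn
        have h7 : ((h₂ + ε) / (ε * (1 + c))) ≤ (n:ℝ) :=
          le_trans (Nat.le_ceil _) (by exact_mod_cast hn)
        rw [div_le_iff₀ (by positivity)] at h7
        linarith
      filter_upwards [hev4, hev5, hev6, eventually_ge_atTop N₁, eventually_ge_atTop 1]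
        with n e4 e5 e6 e7 e8
      have hn0 : (0:ℝ) < n := by exact_mod_cast Nat.pos_of_ne_zero (by omega)
      have f1 := hN₁ n e7
      have f2 : -Real.log (a n) < -Real.log (b (g n + 1)) := neglog_lt (bpos _) (claimA n e4)
      have f3 := hN₂ (g n + 1) e5
      have hgcast : ((g n + 1 : ℕ):ℝ) = (g n : ℝ) + 1 := by push_cast; ring
      rw [hgcast] at f3
      rw [le_div_iff₀ hn0]
      have hid : (h₁ - ε) - c*(h₂+ε) = ε*(1+c) := by linarith
      have hid_n : (n:ℝ)*((h₁-ε) - c*(h₂+ε)) = (n:ℝ)*(ε*(1+c)) := by rw [hid]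
      have d1 : (n:ℝ)*(h₁-ε) < ((g n:ℝ)+1)*(h₂+ε) := by linarith
      have d2 : c*(n:ℝ)*(h₂+ε) < (g n:ℝ)*(h₂+ε) := by nlinarith [e6, d1, hid_n]
      have d3 := lt_of_mul_lt_mul_right d2 (show (0:ℝ) ≤ h₂+ε by linarith)
      linarith
    · -- switching case
      push_neg at hconst
      have hswitch : ∀ s₀ : ℕ, ∃ s, s₀ ≤ s ∧ B s ≠ B (s+1) := by
        intro s₀
        by_contra hno
        push_neg at hno
        have hconst' : ∀ m, s₀ ≤ m → B m = B s₀ := by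
          intro m hm
          induction m, hm using Nat.le_induction with
          | base => rfl
          | succ m hm ih => rw [← hno m hm, ih]
        obtain ⟨m, hm, hne⟩ := hconst s₀
        exact hne (hconst' m hm)
      have swb : ∀ s, B s ≠ B (s+1) →
          δ^2 * b s ≤ x - L s ∧ δ^2 * b s ≤ (L s + b s) - x := by
        intro s hs
        have hbs := bstep s
        have hbs1 := bstep (s+1)
        have hbp := bpos s
        have hbp1 := bpos (s+1)
        rcases Bool.dichotomy (B s) with h0 | h0
        · have h1 : B (s+1) = true := by
            rcases Bool.dichotomy (B (s+1)) with h1 | h1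
            · exact absurd (h0.trans h1.symm) hs
            · exact h1
          have e1 := hLtrue (s+1) h1
          have e2 := hLfalse s h0
          have hx1 := (hxJ (s+2)).1
          have hx2 := (hxJ (s+1)).2
          constructor
          · nlinarith
          · nlinarith
        · have h1 : B (s+1) = false := by
            rcases Bool.dichotomy (B (s+1)) with h1 | h1
            · exact h1
            · exact absurd (h0.trans h1.symm) hs
          have e1 := hLtrue s h0
          have e2 := hLfalse (s+1) h1
          have hx1 := (hxJ (s+1)).1
          have hx2 := (hxJ (s+2)).2
          constructor
          · nlinarith
          · nlinarith
      rw [frequently_atTop]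
      intro N
      set C : ℝ := -2 * Real.log δ with hC_def
      have hCpos : 0 < C := by
        have := Real.log_neg hδ0 (by linarith)
        rw [hC_def]; nlinarith
      set M : ℕ := max (N₁ + 1) N + 1 with hM_def
      -- choose a switch level s
      obtain ⟨s₀₁, hs₀₁⟩ := exists_pow_lt_of_lt_one (show (0:ℝ) < δ ^ M by positivity) hδ1'
      have hs₀₂ : ∃ s₀₂ : ℕ, (c * C + c * (h₁ - ε)) ≤ (s₀₂:ℝ) * (ε * (1 + c)) := by
        refine ⟨Nat.ceil ((c * C + c * (h₁ - ε)) / (ε * (1 + c))), ?_⟩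
        have h7 := Nat.le_ceil ((c * C + c * (h₁ - ε)) / (ε * (1 + c)))
        rw [div_le_iff₀ (by positivity)] at h7
        linarith
      obtain ⟨s₀₂, hs₀₂⟩ := hs₀₂
      obtain ⟨s, hs₁, hsne⟩ := hswitch (max s₀₁ (max s₀₂ N₂))
      have hsN₂ : N₂ ≤ s := le_trans (le_max_of_le_right (le_max_right _ _)) hs₁
      have hss₂ : (c * C + c * (h₁ - ε)) ≤ (s:ℝ) * (ε * (1 + c)) := by
        refine le_trans hs₀₂ ?_
        have : (s₀₂:ℝ) ≤ (s:ℝ) := by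
          exact_mod_cast le_trans (le_max_of_le_right (le_max_left _ _)) hs₁
        nlinarith [mul_pos hεpos (show (0:ℝ) < 1 + c by linarith)]
      have hbs_small : δ^2 * b s < δ ^ M := by
        have h8 : b s ≤ (1-δ)^s := ble s
        have h9 : (1-δ)^s ≤ (1-δ)^s₀₁ :=
          pow_le_pow_of_le_one (by linarith) (by linarith)
            (le_trans (le_max_left _ _) hs₁)
        have h10 : δ^2 ≤ 1 := by nlinarith
        nlinarith [bpos s, pow_pos hδ0 M]
      -- least n with a n ≤ δ² b s
      have hex : ∃ n, a n ≤ δ^2 * b s := by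
        obtain ⟨n₁, hn₁⟩ := exists_pow_lt_of_lt_one
          (mul_pos (pow_pos hδ0 2) (bpos s)) hδ1'
        exact ⟨n₁, le_of_lt (lt_of_le_of_lt (ale n₁) hn₁)⟩
      obtain ⟨n, hPn, hmin⟩ : ∃ n, a n ≤ δ^2 * b s ∧ ∀ m, m < n → δ^2 * b s < a m :=
        ⟨Nat.find hex, Nat.find_spec hex, fun m hm => not_le.mp (Nat.find_min hex hm)⟩
      -- n is large
      have hnM : M < n := by
        by_contra hle
        push_neg at hle
        have h11 : δ ^ n ≤ a n := age n
        have h12 : δ ^ M ≤ δ ^ n := pow_le_pow_of_le_one (by linarith) (by linarith) hle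
        linarith
      have hnN : N ≤ n := by omega
      refine ⟨n, hnN, ?_⟩
      -- g n ≥ s
      have hgns : s ≤ g n := by
        obtain ⟨hw1, hw2⟩ := swb s hsne
        exact gge n s (le_trans hPn hw1) (le_trans hPn hw2)
      -- quantitative bound
      obtain ⟨m, rfl⟩ : ∃ m, n = m + 1 := ⟨n - 1, by omega⟩
      have hmN₁ : N₁ ≤ m := by omega
      have f1 := hN₁ m hmN₁
      have f2 : -Real.log (a m) < C + -Real.log (b s) := by
        have h13 : δ^2 * b s < a m := hmin m (by omega)
        have h14 := neglog_lt (mul_pos (pow_pos hδ0 2) (bpos s)) h13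
        have h15 : Real.log (δ^2 * b s) = 2 * Real.log δ + Real.log (b s) := by
          rw [Real.log_mul (by positivity) (ne_of_gt (bpos s)), Real.log_pow]

          push_cast; ring
        rw [h15] at h14
        rw [hC_def]
        linarith
      have f3 := hN₂ s hsN₂
      -- conclude c ≤ g n / n
      have hn0 : (0:ℝ) < ((m+1 : ℕ):ℝ) := by positivity
      rw [le_div_iff₀ hn0]
      have hcn : c * ((m+1:ℕ):ℝ) ≤ (s:ℝ) := by
        have hmcast : ((m:ℕ):ℝ) * (h₁ - ε) < C + (s:ℝ) * (h₂ + ε) := by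
          calc ((m:ℕ):ℝ) * (h₁ - ε) ≤ -Real.log (a m) := f1
            _ < C + -Real.log (b s) := f2
            _ ≤ C + (s:ℝ) * (h₂ + ε) := by linarith
        push_cast
        push_cast at hmcast
        nlinarith [show (0:ℝ) < h₁ - ε by linarith, hss₂]
      have : (s:ℝ) ≤ (g (m+1) : ℝ) := by exact_mod_cast hgns
      linarith
  -- assemble
  have hbddabove : IsBoundedUnder (· ≤ ·) atTop (fun n : ℕ => (g n : ℝ) / n) := by
    refine ⟨h₁/h₂ + 1, ?_⟩
    rw [eventually_map]
    exact upperC _ (by linarith)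
  have hcobdd : IsCoboundedUnder (· ≤ ·) atTop (fun n : ℕ => (g n : ℝ) / n) := by
    refine Filter.IsBoundedUnder.isCoboundedUnder_flip ⟨0, ?_⟩
    rw [eventually_map]
    filter_upwards [eventually_ge_atTop 1] with n hn
    positivity
  refine le_antisymm ?_ ?_
  · by_contra hlt
    push_neg at hlt
    have h16 := limsup_le_of_le hcobdd
      (upperC ((h₁/h₂ + limsup (fun n : ℕ => (g n : ℝ) / n) atTop)/2) (by linarith))
    linarith
  · by_contra hlt
    push_neg at hlt
    have h17 := le_limsup_of_frequently_le
      (frequentC ((h₁/h₂ + limsup (fun n : ℕ => (g n : ℝ) / n) atTop)/2) (by linarith))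
      hbddabove
    linarith
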